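/- Let (X_t, Y_t)_{t≥1} be an adapted sequence of pairs of real random variables with respect to a filtration (F_t), and suppose that for every t and every z ∈ ℝ, P(X_t ≤ z | F_{t−1}) ≤ P(Y_t ≤ z | F_{t−1}) almost surely. Let (λ_t)_{t≥1} be a predictable sequence with values in [0,1] and (z_t)_{t≥1} a predictable sequence of real numbers. Then E_t = ∏_{ℓ=1}^t (1 + λ_ℓ(1{X_ℓ ≤ z_ℓ} − 1{Y_ℓ ≤ z_ℓ})) is a nonnegative supermartingale with E_0 = 1, and consequently P(∃ t : E_t ≥ 1/α) ≤ α for all α ∈ (0,1). -/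

import Mathlib

open MeasureTheory Filter

lemma fsdAux_measure_le {Ω : Type*} {m : MeasurableSpace Ω} (P : Measure Ω) [IsProbabilityMeasure P]
    {m' : MeasurableSpace Ω} (hm' : m' ≤ m) {X Y ζ : Ω → ℝ}
    (hX : Measurable[m] X) (hY : Measurable[m] Y) (hζ : Measurable[m'] ζ)
    (hdom : ∀ c : ℝ, ∀ S : Set Ω, MeasurableSet[m'] S →
      P (S ∩ {ω | X ω ≤ c}) ≤ P (S ∩ {ω | Y ω ≤ c}))
    {A : Set Ω} (hA : MeasurableSet[m'] A) :
    P (A ∩ {ω | X ω ≤ ζ ω}) ≤ P (A ∩ {ω | Y ω ≤ ζ ω}) := by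
  -- dyadic upper approximation of ζ
  set zn : ℕ → Ω → ℝ := fun n ω => (⌈ζ ω * 2 ^ n⌉ : ℝ) / 2 ^ n with hzn
  have h2pos : ∀ n : ℕ, (0:ℝ) < 2 ^ n := fun n => by positivity
  have hle : ∀ n ω, ζ ω ≤ zn n ω := fun n ω => by
    rw [hzn, le_div_iff₀ (h2pos n)]; exact Int.le_ceil _
  have hub : ∀ n ω, zn n ω ≤ ζ ω + ((2:ℝ) ^ n)⁻¹ := fun n ω => by
    rw [hzn]
    rw [div_le_iff₀ (h2pos n)]
    have := (Int.ceil_lt_add_one (ζ ω * 2 ^ n)).le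
    calc ((⌈ζ ω * 2 ^ n⌉ : ℝ)) ≤ ζ ω * 2 ^ n + 1 := this
      _ = (ζ ω + ((2:ℝ) ^ n)⁻¹) * 2 ^ n := by field_simp
  have hanti : ∀ n ω, zn (n+1) ω ≤ zn n ω := by
    intro n ω
    rw [hzn]
    have h1 : (⌈ζ ω * 2 ^ (n+1)⌉ : ℤ) ≤ 2 * ⌈ζ ω * 2 ^ n⌉ := by
      rw [Int.ceil_le]
      push_cast
      calc ζ ω * 2 ^ (n+1) = (ζ ω * 2 ^ n) * 2 := by ring
        _ ≤ (⌈ζ ω * 2 ^ n⌉ : ℝ) * 2 := by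
            exact mul_le_mul_of_nonneg_right (Int.le_ceil _) (by norm_num)
        _ = 2 * (⌈ζ ω * 2 ^ n⌉ : ℝ) := by ring
    have : ((⌈ζ ω * 2 ^ (n+1)⌉ : ℝ)) ≤ 2 * (⌈ζ ω * 2 ^ n⌉ : ℝ) := by exact_mod_cast h1
    rw [div_le_div_iff₀ (h2pos (n+1)) (h2pos n)]
    calc ((⌈ζ ω * 2 ^ (n+1)⌉ : ℝ)) * 2 ^ n ≤ (2 * (⌈ζ ω * 2 ^ n⌉ : ℝ)) * 2 ^ n := by
          exact mul_le_mul_of_nonneg_right this (h2pos n).le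
      _ = (⌈ζ ω * 2 ^ n⌉ : ℝ) * 2 ^ (n+1) := by ring
  -- step: for each n, P(A ∩ {X ≤ zn n}) ≤ P(A ∩ {Y ≤ zn n})
  have hstep : ∀ n, P (A ∩ {ω | X ω ≤ zn n ω}) ≤ P (A ∩ {ω | Y ω ≤ zn n ω}) := by
    intro n
    have hmC : ∀ k : ℤ, MeasurableSet[m'] (A ∩ {ω | ⌈ζ ω * 2 ^ n⌉ = k}) := by
      intro k
      refine hA.inter ?_
      have : Measurable[m'] fun ω => ⌈ζ ω * 2 ^ n⌉ :=
        Int.measurable_ceil.comp (hζ.mul measurable_const)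
      exact this (measurableSet_singleton k)
    have keyU : ∀ W : Ω → ℝ, Measurable[m] W → A ∩ {ω | W ω ≤ zn n ω}
        = ⋃ k : ℤ, ((A ∩ {ω | ⌈ζ ω * 2 ^ n⌉ = k}) ∩ {ω | W ω ≤ (k : ℝ) / 2 ^ n}) := by
      intro W _
      ext ω
      simp only [Set.mem_iUnion, Set.mem_inter_iff, Set.mem_setOf_eq]
      constructor
      · rintro ⟨hAω, hW⟩
        exact ⟨⌈ζ ω * 2 ^ n⌉, ⟨⟨hAω, rfl⟩, hW⟩⟩
      · rintro ⟨k, ⟨⟨hAω, hk⟩, hW⟩⟩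
        exact ⟨hAω, by rw [hzn]; simpa [hk] using hW⟩
    have hdisj : ∀ W : Ω → ℝ, Pairwise (Function.onFun Disjoint
        fun k : ℤ => ((A ∩ {ω | ⌈ζ ω * 2 ^ n⌉ = k}) ∩ {ω | W ω ≤ (k : ℝ) / 2 ^ n})) := by
      intro W k l hkl
      refine Set.disjoint_left.2 ?_
      rintro ω ⟨⟨_, hk⟩, _⟩ ⟨⟨_, hl⟩, _⟩
      exact hkl (hk ▸ hl ▸ rfl)
    have hmeasX : ∀ k : ℤ, MeasurableSet[m]
        ((A ∩ {ω | ⌈ζ ω * 2 ^ n⌉ = k}) ∩ {ω | X ω ≤ (k : ℝ) / 2 ^ n}) := fun k =>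
      (hm' _ (hmC k)).inter (measurableSet_le hX measurable_const)
    have hmeasY : ∀ k : ℤ, MeasurableSet[m]
        ((A ∩ {ω | ⌈ζ ω * 2 ^ n⌉ = k}) ∩ {ω | Y ω ≤ (k : ℝ) / 2 ^ n}) := fun k =>
      (hm' _ (hmC k)).inter (measurableSet_le hY measurable_const)
    rw [keyU X hX, keyU Y hY, measure_iUnion (hdisj X) hmeasX, measure_iUnion (hdisj Y) hmeasY]
    exact ENNReal.summable.tsum_le_tsum (fun k => hdom ((k:ℝ)/2^n) _ (hmC k)) ENNReal.summable
  -- limit in n on the Y side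
  have hXsub : ∀ n, A ∩ {ω | X ω ≤ ζ ω} ⊆ A ∩ {ω | X ω ≤ zn n ω} := by
    intro n ω ⟨h1, h2⟩; exact ⟨h1, le_trans h2 (hle n ω)⟩
  have hYanti : Antitone fun n => A ∩ {ω | Y ω ≤ zn n ω} := by
    refine antitone_nat_of_succ_le fun n ω ⟨h1, h2⟩ => ⟨h1, le_trans h2 (hanti n ω)⟩
  have hYinter : (⋂ n, A ∩ {ω | Y ω ≤ zn n ω}) = A ∩ {ω | Y ω ≤ ζ ω} := by
    ext ω
    simp only [Set.mem_iInter, Set.mem_inter_iff, Set.mem_setOf_eq]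
    constructor
    · intro h
      refine ⟨(h 0).1, ?_⟩
      have htend : Tendsto (fun n => zn n ω) atTop (nhds (ζ ω)) := by
        have h0 : Tendsto (fun n : ℕ => ((2:ℝ) ^ n)⁻¹) atTop (nhds 0) := by
          simp_rw [← inv_pow]
          exact tendsto_pow_atTop_nhds_zero_of_lt_one (by norm_num) (by norm_num)
        have := h0.const_add (ζ ω)
        rw [add_zero] at this
        exact tendsto_of_tendsto_of_tendsto_of_le_of_le tendsto_const_nhds this
          (fun n => hle n ω) (fun n => hub n ω)
      exact ge_of_tendsto htend (Eventually.of_forall fun n => (h n).2)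
    · intro ⟨h1, h2⟩ n
      exact ⟨h1, le_trans h2 (hle n ω)⟩
  have hYmeas : ∀ n, MeasurableSet[m] (A ∩ {ω | Y ω ≤ zn n ω}) := by
    intro n
    refine (hm' _ hA).inter (measurableSet_le hY ?_)
    have h1 : Measurable[m'] fun ω => (⌈ζ ω * 2 ^ n⌉ : ℤ) :=
      Int.measurable_ceil.comp (hζ.mul measurable_const)
    have h2 : Measurable[m'] fun ω => zn n ω :=
      ((measurable_from_top (β := ℝ)).comp h1).div measurable_const
    exact h2.mono hm' le_rfl
  have htendY : Tendsto (fun n => P (A ∩ {ω | Y ω ≤ zn n ω})) atTop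
      (nhds (P (A ∩ {ω | Y ω ≤ ζ ω}))) := by
    rw [← hYinter]
    exact tendsto_measure_iInter_atTop (fun n => (hYmeas n).nullMeasurableSet) hYanti
      ⟨0, measure_ne_top _ _⟩
  exact ge_of_tendsto htendY (Eventually.of_forall fun n =>
    le_trans (measure_mono (hXsub n)) (hstep n))

lemma fsdAux_condexp_nonpos {Ω : Type*} {m' : MeasurableSpace Ω} {m : MeasurableSpace Ω}
    (P : Measure Ω) [IsProbabilityMeasure P] (hm' : m' ≤ m) {X Y ζ : Ω → ℝ}
    (hX : Measurable[m] X) (hY : Measurable[m] Y) (hζ : Measurable[m'] ζ)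
    (hdomc : ∀ c : ℝ, ∀ᵐ ω ∂P,
      (P[Set.indicator {ω' | X ω' ≤ c} (fun _ => (1 : ℝ)) | m']) ω ≤
      (P[Set.indicator {ω' | Y ω' ≤ c} (fun _ => (1 : ℝ)) | m']) ω) :
    (P[fun ω => (if X ω ≤ ζ ω then (1:ℝ) else 0) - (if Y ω ≤ ζ ω then (1:ℝ) else 0) | m'])
      ≤ᵐ[P] 0 := by
  haveI : SigmaFinite (P.trim hm') := inferInstance
  -- measure form of the constant-threshold dominance
  have hsets : ∀ W : Ω → ℝ, Measurable[m] W → ∀ c : ℝ, ∀ S : Set Ω, MeasurableSet[m'] S →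
      ∫ ω in S, Set.indicator {ω' | W ω' ≤ c} (fun _ => (1:ℝ)) ω ∂P
        = (P (S ∩ {ω | W ω ≤ c})).toReal := by
    intro W hW c S hS
    rw [setIntegral_indicator (measurableSet_le hW measurable_const)]
    simp [Measure.restrict_apply (measurableSet_le hW measurable_const),
      Set.inter_comm, measureReal_def]
  have hindint : ∀ W : Ω → ℝ, Measurable[m] W → ∀ c : ℝ,
      Integrable (Set.indicator {ω' | W ω' ≤ c} (fun _ => (1:ℝ))) P := fun W hW c =>
    (integrable_const (1:ℝ)).indicator (measurableSet_le hW measurable_const)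
  have hdomm : ∀ c : ℝ, ∀ S : Set Ω, MeasurableSet[m'] S →
      P (S ∩ {ω | X ω ≤ c}) ≤ P (S ∩ {ω | Y ω ≤ c}) := by
    intro c S hS
    have h1 : ∫ ω in S, (P[Set.indicator {ω' | X ω' ≤ c} (fun _ => (1:ℝ)) | m']) ω ∂P
        ≤ ∫ ω in S, (P[Set.indicator {ω' | Y ω' ≤ c} (fun _ => (1:ℝ)) | m']) ω ∂P :=
      setIntegral_mono_ae integrable_condExp.integrableOn integrable_condExp.integrableOn
        (hdomc c)
    rw [setIntegral_condExp hm' (hindint X hX c) hS,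
      setIntegral_condExp hm' (hindint Y hY c) hS, hsets X hX c S hS, hsets Y hY c S hS] at h1
    exact (ENNReal.toReal_le_toReal (measure_ne_top _ _) (measure_ne_top _ _)).mp h1
  -- threshold ζ, set form
  have hζm : Measurable[m] ζ := hζ.mono hm' le_rfl
  have hXζ : MeasurableSet[m] {ω | X ω ≤ ζ ω} := measurableSet_le hX hζm
  have hYζ : MeasurableSet[m] {ω | Y ω ≤ ζ ω} := measurableSet_le hY hζm
  set D : Ω → ℝ := fun ω => (if X ω ≤ ζ ω then (1:ℝ) else 0) - (if Y ω ≤ ζ ω then (1:ℝ) else 0)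
    with hD
  have hDint : Integrable D P := by
    refine Integrable.sub ?_ ?_
    · refine ((integrable_const (1:ℝ)).indicator hXζ).congr (Eventually.of_forall fun ω => ?_); simp [Set.indicator]
    · refine ((integrable_const (1:ℝ)).indicator hYζ).congr (Eventually.of_forall fun ω => ?_); simp [Set.indicator]
  have hDset : ∀ S : Set Ω, MeasurableSet[m'] S → ∫ ω in S, D ω ∂P ≤ 0 := by
    intro S hS
    have hXint : Integrable (fun ω => if X ω ≤ ζ ω then (1:ℝ) else 0) P := by
      refine ((integrable_const (1:ℝ)).indicator hXζ).congr (Eventually.of_forall fun ω => ?_); simp [Set.indicator]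
    have hYint : Integrable (fun ω => if Y ω ≤ ζ ω then (1:ℝ) else 0) P := by
      refine ((integrable_const (1:ℝ)).indicator hYζ).congr (Eventually.of_forall fun ω => ?_); simp [Set.indicator]
    have heq : ∀ (W : Ω → ℝ) (hW : MeasurableSet[m] {ω | W ω ≤ ζ ω}),
        ∫ ω in S, (if W ω ≤ ζ ω then (1:ℝ) else 0) ∂P = (P (S ∩ {ω | W ω ≤ ζ ω})).toReal := by
      intro W hW
      have : (fun ω => if W ω ≤ ζ ω then (1:ℝ) else 0)
          = Set.indicator {ω | W ω ≤ ζ ω} (fun _ => (1:ℝ)) := by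
        ext ω; simp [Set.indicator]
      rw [this, setIntegral_indicator hW]
      simp [Measure.restrict_apply hW, Set.inter_comm, measureReal_def]
    rw [hD]
    rw [integral_sub hXint.integrableOn hYint.integrableOn, sub_nonpos,
      heq X hXζ, heq Y hYζ]
    refine ENNReal.toReal_mono (measure_ne_top _ _) ?_
    exact fsdAux_measure_le P hm' hX hY hζ hdomm hS
  -- the conditional expectation is a.e. nonpositive
  set g := P[D | m'] with hg
  have hgm : StronglyMeasurable[m'] g := stronglyMeasurable_condExp
  have hgi : Integrable g P := integrable_condExp
  have hSk : ∀ k : ℕ, P {ω | 1/(k+1:ℝ) ≤ g ω} = 0 := by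
    intro k
    have hSmeas : MeasurableSet[m'] {ω | 1/(k+1:ℝ) ≤ g ω} :=
      measurableSet_le measurable_const hgm.measurable
    have h1 : ∫ ω in {ω | 1/(k+1:ℝ) ≤ g ω}, g ω ∂P ≤ 0 := by
      rw [hg, setIntegral_condExp hm' hDint hSmeas]
      exact hDset _ hSmeas
    have h2 : 1/(k+1:ℝ) * (P {ω | 1/(k+1:ℝ) ≤ g ω}).toReal
        ≤ ∫ ω in {ω | 1/(k+1:ℝ) ≤ g ω}, g ω ∂P :=
      setIntegral_ge_of_const_le_real (hm' _ hSmeas) (measure_ne_top _ _)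
        (fun ω hω => hω) hgi.integrableOn
    have hkpos : (0:ℝ) < 1/(k+1:ℝ) := by positivity
    have h3 : (P {ω | 1/(k+1:ℝ) ≤ g ω}).toReal ≤ 0 := by nlinarith [h1, h2, hkpos]
    have := le_antisymm h3 ENNReal.toReal_nonneg
    rwa [ENNReal.toReal_eq_zero_iff, or_iff_left (measure_ne_top _ _)] at this
  have hpos : P {ω | 0 < g ω} = 0 := by
    refine measure_mono_null (fun ω hω => ?_) (measure_iUnion_null hSk)
    obtain ⟨n, hn⟩ := exists_nat_one_div_lt (show (0:ℝ) < g ω from hω)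
    exact Set.mem_iUnion.2 ⟨n, hn.le⟩
  rw [EventuallyLE, ae_iff]
  have hset : {a | ¬ (P[D|m']) a ≤ (0 : Ω → ℝ) a} = {ω | 0 < g ω} := by
    ext ω; simp [hg, not_le]
  rw [hset]; exact hpos


/-- Under conditional first-order stochastic dominance of `X_t` over `Y_t` given the past,
the predictably-bet coin-betting wealth process
`E_t = ∏_{ℓ=1}^t (1 + λ_ℓ (1{X_ℓ ≤ z_ℓ} − 1{Y_ℓ ≤ z_ℓ}))` is a nonnegative supermartingale
with `E_0 = 1`, and satisfies Ville's inequality. -/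
theorem fsd_test_supermartingale_and_ville
    {Ω : Type*} {m : MeasurableSpace Ω} (P : Measure Ω) [IsProbabilityMeasure P]
    (ℱ : Filtration ℕ m) (X Y : ℕ → Ω → ℝ)
    (hXadp : ∀ t, Measurable[ℱ t] (X t)) (hYadp : ∀ t, Measurable[ℱ t] (Y t))
    (hdom : ∀ t : ℕ, 1 ≤ t → ∀ c : ℝ, ∀ᵐ ω ∂P,
      (P[Set.indicator {ω' | X t ω' ≤ c} (fun _ => (1 : ℝ)) | ℱ (t - 1)]) ω ≤
      (P[Set.indicator {ω' | Y t ω' ≤ c} (fun _ => (1 : ℝ)) | ℱ (t - 1)]) ω)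
    (lam z : ℕ → Ω → ℝ)
    (hlampred : ∀ t : ℕ, 1 ≤ t → Measurable[ℱ (t - 1)] (lam t))
    (hzpred : ∀ t : ℕ, 1 ≤ t → Measurable[ℱ (t - 1)] (z t))
    (hlam : ∀ t ω, lam t ω ∈ Set.Icc (0 : ℝ) 1)
    (E : ℕ → Ω → ℝ)
    (hE : ∀ t ω, E t ω = ∏ ℓ ∈ Finset.Icc 1 t,
      (1 + lam ℓ ω * ((if X ℓ ω ≤ z ℓ ω then (1 : ℝ) else 0)
        - (if Y ℓ ω ≤ z ℓ ω then (1 : ℝ) else 0)))) :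
    Supermartingale E ℱ P ∧ (∀ ω, E 0 ω = 1) ∧ (∀ t ω, 0 ≤ E t ω) ∧
    ∀ α : ℝ, α ∈ Set.Ioo (0 : ℝ) 1 →
      P {ω | ∃ t : ℕ, 1 / α ≤ E t ω} ≤ ENNReal.ofReal α := by
  -- basic pointwise facts about the factors
  set fac : ℕ → Ω → ℝ := fun ℓ ω => 1 + lam ℓ ω * ((if X ℓ ω ≤ z ℓ ω then (1 : ℝ) else 0)
      - (if Y ℓ ω ≤ z ℓ ω then (1 : ℝ) else 0)) with hfac
  have hfac01 : ∀ ℓ ω, 0 ≤ fac ℓ ω ∧ fac ℓ ω ≤ 2 := by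
    intro ℓ ω
    have h1 := (hlam ℓ ω).1
    have h2 := (hlam ℓ ω).2
    constructor <;> · simp only [hfac]; split_ifs <;> nlinarith
  have hEnonneg : ∀ t ω, 0 ≤ E t ω := by
    intro t ω; rw [hE]
    exact Finset.prod_nonneg fun ℓ _ => (hfac01 ℓ ω).1
  have hEbdd : ∀ t ω, E t ω ≤ 2 ^ t := by
    intro t ω; rw [hE]
    calc (∏ ℓ ∈ Finset.Icc 1 t, fac ℓ ω) ≤ ∏ ℓ ∈ Finset.Icc 1 t, (2:ℝ) :=
          Finset.prod_le_prod (fun ℓ _ => (hfac01 ℓ ω).1) (fun ℓ _ => (hfac01 ℓ ω).2)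
      _ = 2 ^ t := by rw [Finset.prod_const, Nat.card_Icc]; norm_num
  -- measurability
  have hmeasfac : ∀ t ℓ, 1 ≤ ℓ → ℓ ≤ t → Measurable[ℱ t] (fac ℓ) := by
    intro t ℓ h1 h2
    have hXm : Measurable[ℱ t] (X ℓ) := (hXadp ℓ).mono (ℱ.mono h2) le_rfl
    have hYm : Measurable[ℱ t] (Y ℓ) := (hYadp ℓ).mono (ℱ.mono h2) le_rfl
    have hzm : Measurable[ℱ t] (z ℓ) :=
      (hzpred ℓ h1).mono (ℱ.mono (le_trans (Nat.sub_le ℓ 1) h2)) le_rfl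
    have hlm : Measurable[ℱ t] (lam ℓ) :=
      (hlampred ℓ h1).mono (ℱ.mono (le_trans (Nat.sub_le ℓ 1) h2)) le_rfl
    refine measurable_const.add (hlm.mul (Measurable.sub ?_ ?_))
    · exact Measurable.ite (measurableSet_le hXm hzm) measurable_const measurable_const
    · exact Measurable.ite (measurableSet_le hYm hzm) measurable_const measurable_const
  have hmeasE : ∀ t, Measurable[ℱ t] (E t) := by
    intro t
    have : E t = fun ω => ∏ ℓ ∈ Finset.Icc 1 t, fac ℓ ω := funext fun ω => hE t ω
    rw [this]
    exact Finset.measurable_prod _ fun ℓ hℓ =>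
      hmeasfac t ℓ (Finset.mem_Icc.1 hℓ).1 (Finset.mem_Icc.1 hℓ).2
  have hadp : StronglyAdapted ℱ E := fun t => (hmeasE t).stronglyMeasurable
  have hint : ∀ t, Integrable (E t) P := by
    intro t
    refine Integrable.mono' (integrable_const ((2:ℝ) ^ t))
      ((hmeasE t).mono (ℱ.le t) le_rfl).aestronglyMeasurable
      (Eventually.of_forall fun ω => ?_)
    rw [Real.norm_eq_abs, abs_of_nonneg (hEnonneg t ω)]
    exact hEbdd t ω
  -- supermartingale property
  have hsM : Supermartingale E ℱ P := by
    refine supermartingale_nat hadp hint fun t => ?_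
    set D : Ω → ℝ := fun ω => (if X (t+1) ω ≤ z (t+1) ω then (1:ℝ) else 0)
      - (if Y (t+1) ω ≤ z (t+1) ω then (1:ℝ) else 0) with hD
    set f : Ω → ℝ := fun ω => E t ω * lam (t+1) ω with hf
    have hsplit : E (t+1) = E t + f * D := by
      funext ω
      rw [Pi.add_apply, Pi.mul_apply, hE (t+1), hE t,
        Finset.prod_Icc_succ_top (Nat.le_add_left 1 t)]
      simp only [hf, hD, hE t]
      ring
    have hDcond : (P[D | ℱ t]) ≤ᵐ[P] 0 := by
      refine fsdAux_condexp_nonpos P (ℱ.le t) ((hXadp (t+1)).mono (ℱ.le (t+1)) le_rfl)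
        ((hYadp (t+1)).mono (ℱ.le (t+1)) le_rfl) (hzpred (t+1) (by omega)) ?_
      intro c
      exact hdom (t+1) (by omega) c
    have hDbd : ∀ ω, |D ω| ≤ 1 := by
      intro ω; simp only [hD]; split_ifs <;> norm_num
    have hDint : Integrable D P := by
      refine Integrable.mono' (integrable_const (1:ℝ)) ?_
        (Eventually.of_forall fun ω => by rw [Real.norm_eq_abs]; exact hDbd ω)
      have hXm : Measurable[m] (X (t+1)) := (hXadp (t+1)).mono (ℱ.le (t+1)) le_rfl
      have hYm : Measurable[m] (Y (t+1)) := (hYadp (t+1)).mono (ℱ.le (t+1)) le_rfl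
      have hzm : Measurable[m] (z (t+1)) :=
        (hzpred (t+1) (by omega)).mono (ℱ.le t) le_rfl
      exact (((Measurable.ite (measurableSet_le hXm hzm) measurable_const
        measurable_const).sub (Measurable.ite (measurableSet_le hYm hzm) measurable_const
        measurable_const))).aestronglyMeasurable
    have hfsm : StronglyMeasurable[ℱ t] f :=
      ((hmeasE t).mul ((hlampred (t+1) (by omega)).mono le_rfl le_rfl)).stronglyMeasurable
    have hfnonneg : ∀ ω, 0 ≤ f ω := fun ω =>
      mul_nonneg (hEnonneg t ω) (hlam (t+1) ω).1
    have hfbd : ∀ ω, |f ω| ≤ 2 ^ t := by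
      intro ω
      rw [abs_of_nonneg (hfnonneg ω), hf]
      calc E t ω * lam (t+1) ω ≤ E t ω * 1 :=
            mul_le_mul_of_nonneg_left (hlam (t+1) ω).2 (hEnonneg t ω)
        _ ≤ 2 ^ t := by rw [mul_one]; exact hEbdd t ω
    have hfDint : Integrable (f * D) P := by
      refine Integrable.mono' (integrable_const ((2:ℝ) ^ t)) ?_
        (Eventually.of_forall fun ω => ?_)
      · exact ((hfsm.mono (ℱ.le t)).aestronglyMeasurable).mul hDint.1
      · rw [Pi.mul_apply, Real.norm_eq_abs, abs_mul]
        calc |f ω| * |D ω| ≤ (2:ℝ)^t * 1 :=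
              mul_le_mul (hfbd ω) (hDbd ω) (abs_nonneg _) (by positivity)
          _ = 2 ^ t := mul_one _
    haveI : SigmaFinite (P.trim (ℱ.le t)) := inferInstance
    calc P[E (t+1) | ℱ t] = P[E t + f * D | ℱ t] := by rw [hsplit]
      _ =ᵐ[P] P[E t | ℱ t] + P[f * D | ℱ t] := condExp_add (hint t) hfDint _
      _ =ᵐ[P] E t + f * P[D | ℱ t] := by
          refine EventuallyEq.add ?_ ?_
          · exact Filter.EventuallyEq.of_eq
              (condExp_of_stronglyMeasurable (ℱ.le t) (hadp t) (hint t))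
          · exact condExp_mul_of_stronglyMeasurable_left hfsm hfDint hDint
      _ ≤ᵐ[P] E t := by
          filter_upwards [hDcond] with ω hω
          simp only [Pi.zero_apply] at hω
          rw [Pi.add_apply, Pi.mul_apply]
          nlinarith [mul_nonpos_of_nonneg_of_nonpos (hfnonneg ω) hω]
  have hE0 : ∀ ω, E 0 ω = 1 := by intro ω; rw [hE]; simp
  refine ⟨hsM, hE0, hEnonneg, ?_⟩
  -- Ville's inequality
  rintro α ⟨hα0, hα1⟩
  set c : ℝ := 1 / α with hc
  have hcpos : 0 < c := by positivity
  set G : ℕ → Set Ω := fun n => {ω | ∃ k ≤ n, c ≤ E k ω} with hG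
  have hGmeas : ∀ n, MeasurableSet[m] (G n) := by
    intro n
    have : G n = ⋃ (k : ℕ) (_ : k ≤ n), {ω | c ≤ E k ω} := by
      ext ω; simp [hG]
    rw [this]
    exact MeasurableSet.iUnion fun k => MeasurableSet.iUnion fun _ =>
      measurableSet_le measurable_const ((hmeasE k).mono (ℱ.le k) le_rfl)
  have hGn : ∀ n, P (G n) ≤ ENNReal.ofReal α := by
    intro n
    set τ : Ω → WithTop ℕ := fun ω => (hittingBtwn E (Set.Ici c) 0 n ω : ℕ) with hτdef
    have hτ : IsStoppingTime ℱ τ := Adapted.isStoppingTime_hittingBtwn hmeasE measurableSet_Ici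
    have hτle : ∀ ω, τ ω ≤ n := fun ω => WithTop.coe_le_coe.mpr (hittingBtwn_le ω)
    have hSVint : Integrable (stoppedValue E τ) P := by
      have h1 : Integrable (stoppedValue (-E) τ) P :=
        (hsM.neg.integrable_stoppedValue hτ hτle)
      have h2 : stoppedValue (-E) τ = -(stoppedValue E τ) := by
        funext ω; simp [stoppedValue]
      rw [h2] at h1
      simpa using h1.neg
    have hOS : ∫ ω, stoppedValue E τ ω ∂P ≤ 1 := by
      have h1 := hsM.neg.expected_stoppedValue_mono (isStoppingTime_const ℱ 0) hτ
        (fun ω => WithTop.coe_le_coe.mpr (Nat.zero_le _)) hτle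
      have h2 : stoppedValue (-E) (fun _ => (WithTop.some (0:ℕ) : WithTop ℕ)) = fun ω => -(E 0 ω) := by
        funext ω; simp [stoppedValue]
      have h3 : stoppedValue (-E) τ = fun ω => -(stoppedValue E τ ω) := by
        funext ω; simp [stoppedValue]
      simp only [h2, h3, integral_neg] at h1
      have h4 : ∫ ω, E 0 ω ∂P = 1 := by
        have : (fun ω => E 0 ω) = fun _ => (1:ℝ) := funext hE0
        rw [this, integral_const]; simp
      rw [h4] at h1
      linarith
    have hSVnn : 0 ≤ᵐ[P] stoppedValue E τ :=
      Eventually.of_forall fun ω => hEnonneg _ ω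
    have hSVge : ∀ ω ∈ G n, c ≤ stoppedValue E τ ω := by
      rintro ω ⟨k, hkn, hk⟩
      exact stoppedValue_hittingBtwn_mem ⟨k, ⟨Nat.zero_le _, hkn⟩, hk⟩
    have hkey : c * (P (G n)).toReal ≤ ∫ ω in G n, stoppedValue E τ ω ∂P :=
      setIntegral_ge_of_const_le_real (hGmeas n) (measure_ne_top _ _) hSVge
        hSVint.integrableOn
    have h6 : ∫ ω in G n, stoppedValue E τ ω ∂P ≤ 1 :=
      le_trans (setIntegral_le_integral hSVint hSVnn) hOS
    have h7 : (P (G n)).toReal ≤ α := by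
      rw [hc] at hkey
      have := le_trans hkey h6
      calc (P (G n)).toReal = α * (1/α * (P (G n)).toReal) := by field_simp
        _ ≤ α * 1 := mul_le_mul_of_nonneg_left this hα0.le
        _ = α := mul_one _
    rw [← ENNReal.ofReal_toReal (measure_ne_top P (G n))]
    exact ENNReal.ofReal_le_ofReal h7
  have hGmono : Monotone G := by
    intro a b hab ω ⟨k, hk, hck⟩
    exact ⟨k, le_trans hk hab, hck⟩
  have hunion : {ω | ∃ t : ℕ, 1 / α ≤ E t ω} = ⋃ n, G n := by
    ext ω
    simp only [Set.mem_iUnion, hG, Set.mem_setOf_eq, hc]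
    constructor
    · rintro ⟨t, ht⟩; exact ⟨t, t, le_rfl, ht⟩
    · rintro ⟨n, k, _, hk⟩; exact ⟨k, hk⟩
  rw [hunion, hGmono.directed_le.measure_iUnion]
  exact iSup_le hGn
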